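/- For all a > 0 and all λ > 0, the integral over (0,∞) of e^{−λx} · (1/(4√π)) x^{−5/2} e^{−a²/(4x)} (a² − 2x) dx equals √λ · e^{−a√λ}. -/

import Mathlib

open Real MeasureTheory Set Filter Topology

noncomputable def Eint : ℝ → ℝ := fun t => ∫ u in (0:ℝ)..t, Real.exp (-u^2)

lemma Eint_hasDerivAt (t : ℝ) : HasDerivAt Eint (Real.exp (-t^2)) t := by
  have hc : Continuous fun u : ℝ => Real.exp (-u^2) := by continuity
  exact intervalIntegral.integral_hasDerivAt_right (hc.intervalIntegrable _ _)
    (hc.stronglyMeasurableAtFilter _ _) hc.continuousAt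

lemma Eint_tendsto_atTop : Tendsto Eint atTop (𝓝 (Real.sqrt Real.pi / 2)) := by
  have hi : IntegrableOn (fun u : ℝ => Real.exp (-u^2)) (Ioi 0) := by
    have := (integrable_exp_neg_mul_sq (one_pos)).integrableOn (s := Ioi (0:ℝ))
    simpa using this
  have h2 := intervalIntegral_tendsto_integral_Ioi 0 hi tendsto_id
  have hval : ∫ u in Ioi (0:ℝ), Real.exp (-u^2) = Real.sqrt Real.pi / 2 := by
    have := integral_gaussian_Ioi 1
    simpa using this
  rw [hval] at h2
  exact h2

lemma Eint_neg (t : ℝ) : Eint (-t) = - Eint t := by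
  calc Eint (-t) = ∫ x in (0:ℝ)..(-t), Real.exp (-(-x)^2) := by simp [Eint]
    _ = ∫ x in (-(-t):ℝ)..(-0:ℝ), Real.exp (-x^2) :=
        intervalIntegral.integral_comp_neg (fun x => Real.exp (-x^2))
    _ = - Eint t := by
        rw [neg_neg, neg_zero, intervalIntegral.integral_symm]
        rfl

lemma Eint_tendsto_atBot : Tendsto Eint atBot (𝓝 (-(Real.sqrt Real.pi / 2))) := by
  have h : Tendsto (fun t => -Eint (-t)) atBot (𝓝 (-(Real.sqrt Real.pi / 2))) :=
    (Eint_tendsto_atTop.comp tendsto_neg_atBot_atTop).neg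
  refine h.congr fun t => ?_
  rw [Eint_neg, neg_neg]

lemma rpow_neg_five_halves {r : ℝ} (hr : 0 < r) : (r^2 : ℝ) ^ (-(5:ℝ)/2) = (r^5)⁻¹ := by
  have h1 : (r^2 : ℝ) ^ ((5:ℝ)/2) = r^5 := by
    rw [← Real.rpow_natCast r 2, ← Real.rpow_mul hr.le]
    norm_num
  rw [show (-(5:ℝ)/2) = -((5:ℝ)/2) by ring, Real.rpow_neg (by positivity), h1]

lemma laplace_aux_deriv (a s r : ℝ) (ha : 0 < a) (hs : 0 < s) (hr : 0 < r) :
    HasDerivAt (fun y : ℝ =>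
        Real.exp (-(s^2) * y) * Real.exp (-a^2/4 * y⁻¹) *
          ((Real.sqrt Real.pi)⁻¹ * (Real.sqrt y)⁻¹)
        + (s / Real.sqrt Real.pi * Real.exp (-(a*s))) *
            Eint (s * Real.sqrt y - a/2 * (Real.sqrt y)⁻¹)
        + (s / Real.sqrt Real.pi * Real.exp (a*s)) *
            Eint (s * Real.sqrt y + a/2 * (Real.sqrt y)⁻¹))
      (Real.exp (-(s^2) * r^2) *
        (1 / (4 * Real.sqrt Real.pi) * (r^2) ^ (-(5:ℝ)/2) * Real.exp (-a ^ 2 / (4 * r^2)) *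
          (a ^ 2 - 2 * r^2))) (r^2) := by
  have hx : (0:ℝ) < r^2 := by positivity
  have hxne : (r^2 : ℝ) ≠ 0 := hx.ne'
  have hsr : Real.sqrt (r^2) = r := Real.sqrt_sq hr.le
  have hπ : (0:ℝ) < Real.sqrt Real.pi := Real.sqrt_pos.mpr Real.pi_pos
  have dsqrt : HasDerivAt Real.sqrt (1/(2*r)) (r^2) := by
    have := Real.hasDerivAt_sqrt hxne
    rwa [hsr] at this
  have dinv : HasDerivAt (fun y : ℝ => (Real.sqrt y)⁻¹) (-(1/(2*r))/r^2) (r^2) := by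
    have h := dsqrt.inv (by rw [hsr]; exact hr.ne')
    rwa [hsr] at h
  have dA : HasDerivAt (fun y : ℝ => Real.exp (-(s^2) * y)) (Real.exp (-(s^2)*r^2) * -(s^2)) (r^2) := by
    have h0 : HasDerivAt (fun y : ℝ => -(s^2) * y) (-(s^2)) (r^2) := by
      simpa using (hasDerivAt_id (r^2)).const_mul (-(s^2))
    exact h0.exp
  have dB : HasDerivAt (fun y : ℝ => Real.exp (-a^2/4 * y⁻¹))
      (Real.exp (-a^2/4 * (r^2)⁻¹) * (-a^2/4 * -(((r^2)^2)⁻¹))) (r^2) :=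
    ((hasDerivAt_inv hxne).const_mul (-a^2/4)).exp
  have dT1 := (dA.mul dB).mul (dinv.const_mul ((Real.sqrt Real.pi)⁻¹))
  have du : HasDerivAt (fun y : ℝ => s * Real.sqrt y - a/2 * (Real.sqrt y)⁻¹)
      (s * (1/(2*r)) - a/2 * (-(1/(2*r))/r^2)) (r^2) :=
    (dsqrt.const_mul s).sub (dinv.const_mul (a/2))
  have dv : HasDerivAt (fun y : ℝ => s * Real.sqrt y + a/2 * (Real.sqrt y)⁻¹)
      (s * (1/(2*r)) + a/2 * (-(1/(2*r))/r^2)) (r^2) :=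
    (dsqrt.const_mul s).add (dinv.const_mul (a/2))
  have dEu : HasDerivAt (fun y : ℝ => Eint (s * Real.sqrt y - a/2 * (Real.sqrt y)⁻¹))
      (Real.exp (-(s * Real.sqrt (r^2) - a/2 * (Real.sqrt (r^2))⁻¹)^2) *
        (s * (1/(2*r)) - a/2 * (-(1/(2*r))/r^2))) (r^2) :=
    (Eint_hasDerivAt _).comp (r^2) du
  have dEv : HasDerivAt (fun y : ℝ => Eint (s * Real.sqrt y + a/2 * (Real.sqrt y)⁻¹))
      (Real.exp (-(s * Real.sqrt (r^2) + a/2 * (Real.sqrt (r^2))⁻¹)^2) *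
        (s * (1/(2*r)) + a/2 * (-(1/(2*r))/r^2))) (r^2) :=
    (Eint_hasDerivAt _).comp (r^2) dv
  have H := (dT1.add (dEu.const_mul (s / Real.sqrt Real.pi * Real.exp (-(a*s))))).add
    (dEv.const_mul (s / Real.sqrt Real.pi * Real.exp (a*s)))
  convert H using 1
  · rfl
  · rfl
  · rfl
  simp only [Pi.mul_apply]
  rw [hsr]
  have hexpu : Real.exp (-(s*r - a/2*r⁻¹)^2)
      = Real.exp (-(s^2) * r^2) * Real.exp (-a^2/4 * (r^2)⁻¹) * Real.exp (a*s) := by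
    rw [← Real.exp_add, ← Real.exp_add]
    congr 1
    field_simp
    ring
  have hexpv : Real.exp (-(s*r + a/2*r⁻¹)^2)
      = Real.exp (-(s^2) * r^2) * Real.exp (-a^2/4 * (r^2)⁻¹) * Real.exp (-(a*s)) := by
    rw [← Real.exp_add, ← Real.exp_add]
    congr 1
    field_simp
    ring
  have hB : Real.exp (-a ^ 2 / (4 * r^2)) = Real.exp (-a^2/4 * (r^2)⁻¹) := by
    congr 1; field_simp
  rw [hexpu, hexpv, hB, rpow_neg_five_halves hr, Real.exp_neg (a*s)]
  have hP : Real.exp (a*s) ≠ 0 := (Real.exp_pos _).ne'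
  field_simp
  ring

lemma laplace_aux_integrable (a l : ℝ) (ha : 0 < a) (hl : 0 < l) :
    IntegrableOn (fun x => Real.exp (-l * x) *
      (1 / (4 * Real.sqrt Real.pi) * x ^ (-(5:ℝ)/2) * Real.exp (-a ^ 2 / (4 * x)) *
        (a ^ 2 - 2 * x))) (Ioi (0:ℝ)) := by
  have hπ : (0:ℝ) < Real.sqrt Real.pi := Real.sqrt_pos.mpr Real.pi_pos
  set C : ℝ := a^2 + 2*(a^2+2)/l + 32/l^2 with hC
  clear_value C
  set M : ℝ := 1/(4*Real.sqrt Real.pi) * (1728/a^6) * C with hM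
  clear_value M
  have hcont : ContinuousOn (fun x : ℝ => Real.exp (-l * x) *
      (1 / (4 * Real.sqrt Real.pi) * x ^ (-(5:ℝ)/2) * Real.exp (-a ^ 2 / (4 * x)) *
        (a ^ 2 - 2 * x))) (Ioi 0) := by
    apply ContinuousOn.mul
    · exact (Real.continuous_exp.comp (continuous_const.mul continuous_id)).continuousOn
    apply ContinuousOn.mul
    · apply ContinuousOn.mul
      · exact continuousOn_const.mul
          (ContinuousOn.rpow_const continuousOn_id
            (fun x hx => Or.inl (ne_of_gt (mem_Ioi.mp hx))))
      · exact Real.continuous_exp.comp_continuousOn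
          (continuousOn_const.div (continuous_const.mul continuous_id).continuousOn
            (fun x hx => by
              have hx' : 0 < x := mem_Ioi.mp hx
              positivity))
    · exact (continuous_const.sub (continuous_const.mul continuous_id)).continuousOn
  refine Integrable.mono' ((exp_neg_integrableOn_Ioi 0 (half_pos hl)).const_mul M)
    (hcont.aestronglyMeasurable measurableSet_Ioi) ?_
  filter_upwards [ae_restrict_mem measurableSet_Ioi] with x hx
  simp only [mem_Ioi] at hx
  obtain ⟨r, hr, hrx⟩ : ∃ r : ℝ, 0 < r ∧ r^2 = x :=
    ⟨Real.sqrt x, Real.sqrt_pos.mpr hx, Real.sq_sqrt hx.le⟩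
  have hEh : ∀ t : ℝ, 0 ≤ t → 1 ≤ Real.exp t := fun t ht => Real.one_le_exp ht
  set Eh : ℝ := Real.exp (l/2 * x) with hEhdef
  clear_value Eh
  have e1 : (1:ℝ) ≤ Eh := by rw [hEhdef]; exact Real.one_le_exp (by positivity)
  have e2 : l/2*x + 1 ≤ Eh := by rw [hEhdef]; exact Real.add_one_le_exp _
  have e3 : (l/4*x + 1)^2 ≤ Eh := by
    have h := Real.add_one_le_exp (l/4*x)
    have h2 : Eh = Real.exp (l/4*x)^2 := by
      rw [hEhdef, show l/2*x = l/4*x + l/4*x by ring, Real.exp_add, sq]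
    rw [h2]
    have hnn : (0:ℝ) ≤ l/4*x + 1 := by positivity
    exact pow_le_pow_left₀ hnn h 2
  -- exp bound on the small exponential
  have key1 : Real.exp (-a^2/(4*x)) ≤ 1728/a^6 * r^6 := by
    set t : ℝ := a^2/(4*x) with htdef
    clear_value t
    have ht : 0 < t := by rw [htdef]; positivity
    have h3 : t/3 ≤ Real.exp (t/3) := by linarith [Real.add_one_le_exp (t/3)]
    have hexp : Real.exp t = Real.exp (t/3)^3 := by
      rw [← Real.exp_nat_mul]
      congr 1
      push_cast
      ring
    have hcube : (t/3)^3 ≤ Real.exp t := by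
      rw [hexp]; exact pow_le_pow_left₀ (by positivity) h3 3
    have hinv : Real.exp (-a^2/(4*x)) = (Real.exp t)⁻¹ := by
      rw [← Real.exp_neg]; congr 1; rw [htdef]; ring
    rw [hinv]
    have h4 : (Real.exp t)⁻¹ ≤ ((t/3)^3)⁻¹ :=
      inv_anti₀ (by positivity) hcube
    refine h4.trans (le_of_eq ?_)
    rw [htdef, ← hrx]
    field_simp
    ring
  have key3 : r*(a^2+2*r^2) ≤ C * Eh := by
    have hra : r*(a^2+2*r^2) ≤ (1+r^2)*(a^2+2*r^2) := by nlinarith [sq_nonneg (r-1), sq_nonneg a, sq_nonneg r]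
    have hr2 : r^2 ≤ 2/l * Eh := by
      rw [← hrx] at e2
      rw [div_mul_eq_mul_div, le_div_iff₀ hl]
      nlinarith
    have hr4 : r^4 ≤ 16/l^2 * Eh := by
      have hx2 : (l/4*x)^2 ≤ Eh := by nlinarith [sq_nonneg (l/4*x)]
      rw [← hrx] at hx2
      rw [div_mul_eq_mul_div, le_div_iff₀ (by positivity : (0:ℝ) < l^2)]
      nlinarith
    calc r*(a^2+2*r^2) ≤ (1+r^2)*(a^2+2*r^2) := hra
      _ = a^2 + (a^2+2)*r^2 + 2*r^4 := by ring
      _ ≤ a^2*Eh + (a^2+2)*(2/l*Eh) + 2*(16/l^2*Eh) := by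
          have h1 : a^2 ≤ a^2*Eh := by nlinarith [sq_nonneg a]
          have h2 : (a^2+2)*r^2 ≤ (a^2+2)*(2/l*Eh) := by
            apply mul_le_mul_of_nonneg_left hr2 (by positivity)
          have h3 : 2*r^4 ≤ 2*(16/l^2*Eh) := by linarith
          linarith
      _ = C * Eh := by rw [hC]; field_simp; ring
  -- now the norm bound
  have habs : ‖Real.exp (-l * x) *
      (1 / (4 * Real.sqrt Real.pi) * x ^ (-(5:ℝ)/2) * Real.exp (-a ^ 2 / (4 * x)) *
        (a ^ 2 - 2 * x))‖
      = Real.exp (-l * x) *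
        (1 / (4 * Real.sqrt Real.pi) * x ^ (-(5:ℝ)/2) * Real.exp (-a ^ 2 / (4 * x))) *
          |a ^ 2 - 2 * x| := by
    rw [Real.norm_eq_abs, abs_mul, abs_mul, Real.abs_exp,
      abs_of_nonneg (by positivity : (0:ℝ) ≤ 1 / (4 * Real.sqrt Real.pi) * x ^ (-(5:ℝ)/2) * Real.exp (-a ^ 2 / (4 * x)))]
    ring
  rw [habs]
  have hq : |a^2 - 2*x| ≤ a^2 + 2*x := by
    rw [abs_le]; constructor <;> linarith [sq_nonneg a, hx.le]
  have hrp : x ^ (-(5:ℝ)/2) = (r^5)⁻¹ := by rw [← hrx]; exact rpow_neg_five_halves hr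
  calc Real.exp (-l * x) *
        (1 / (4 * Real.sqrt Real.pi) * x ^ (-(5:ℝ)/2) * Real.exp (-a ^ 2 / (4 * x))) *
          |a ^ 2 - 2 * x|
      ≤ Real.exp (-l * x) *
        (1 / (4 * Real.sqrt Real.pi) * x ^ (-(5:ℝ)/2) * Real.exp (-a ^ 2 / (4 * x))) *
          (a ^ 2 + 2 * x) := by
        apply mul_le_mul_of_nonneg_left hq
        positivity
    _ ≤ Real.exp (-l * x) *
        (1 / (4 * Real.sqrt Real.pi) * ((r^5)⁻¹ * (1728/a^6 * r^6))) * (a^2 + 2*x) := by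
        rw [hrp]
        refine mul_le_mul_of_nonneg_right ?_ (by linarith [sq_nonneg a, hx.le])
        apply mul_le_mul_of_nonneg_left _ (Real.exp_pos _).le
        rw [mul_assoc]
        apply mul_le_mul_of_nonneg_left _ (by positivity)
        exact mul_le_mul_of_nonneg_left key1 (by positivity)
    _ = Real.exp (-l * x) * (1/(4*Real.sqrt Real.pi) * (1728/a^6)) * (r * (a^2 + 2*r^2)) := by
        rw [← hrx]
        field_simp
    _ ≤ Real.exp (-l * x) * (1/(4*Real.sqrt Real.pi) * (1728/a^6)) * (C * Eh) :=
        mul_le_mul_of_nonneg_left key3 (by positivity)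
    _ = M * Real.exp (-(l/2) * x) := by
        rw [hM, hEhdef, show (-(l/2) * x) = -l*x + l/2*x by ring, Real.exp_add]
        ring

/-- For `a > 0` and `λ > 0`, the Laplace transform of
`h_a(x) = (1/(4√π)) x^{-5/2} e^{-a²/(4x)} (a² - 2x)` is `√λ e^{-a√λ}`. -/
theorem laplace_ha (a l : ℝ) (ha : 0 < a) (hl : 0 < l) :
    ∫ x in Set.Ioi (0 : ℝ),
      Real.exp (-l * x) *
        (1 / (4 * Real.sqrt Real.pi) * x ^ (-(5 : ℝ) / 2) * Real.exp (-a ^ 2 / (4 * x)) *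
          (a ^ 2 - 2 * x))
      = Real.sqrt l * Real.exp (-a * Real.sqrt l) := by
  have hπ : (0:ℝ) < Real.sqrt Real.pi := Real.sqrt_pos.mpr Real.pi_pos
  set s : ℝ := Real.sqrt l with hsdef
  have hs0 : 0 < s := Real.sqrt_pos.mpr hl
  have hs2 : s^2 = l := Real.sq_sqrt hl.le
  set c2 : ℝ := s / Real.sqrt Real.pi * Real.exp (-(a*s)) with hc2
  set c3 : ℝ := s / Real.sqrt Real.pi * Real.exp (a*s) with hc3
  set L0 : ℝ := c2 * (-(Real.sqrt Real.pi/2)) + c3 * (Real.sqrt Real.pi/2) with hL0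
  set L1 : ℝ := c2 * (Real.sqrt Real.pi/2) + c3 * (Real.sqrt Real.pi/2) with hL1
  set g0 : ℝ → ℝ := fun y =>
      Real.exp (-l * y) * Real.exp (-a^2/4 * y⁻¹) *
        ((Real.sqrt Real.pi)⁻¹ * (Real.sqrt y)⁻¹)
      + c2 * Eint (s * Real.sqrt y - a/2 * (Real.sqrt y)⁻¹)
      + c3 * Eint (s * Real.sqrt y + a/2 * (Real.sqrt y)⁻¹) with hg0
  set g : ℝ → ℝ := fun y => if 0 < y then g0 y else L0 with hg
  have hgval : ∀ y, 0 < y → g y = g0 y := fun y hy => if_pos hy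
  have hg0val : g 0 = L0 := if_neg (lt_irrefl 0)
  -- tendsto of sqrt at top
  have hsqrt_top : Tendsto Real.sqrt atTop atTop := by
    apply tendsto_atTop_atTop.mpr
    intro b
    refine ⟨b^2, fun x hx => ?_⟩
    calc b ≤ |b| := le_abs_self b
      _ = Real.sqrt (b^2) := (Real.sqrt_sq_eq_abs b).symm
      _ ≤ Real.sqrt x := Real.sqrt_le_sqrt hx
  have hsx : Tendsto (fun x : ℝ => (Real.sqrt x)⁻¹) atTop (𝓝 0) :=
    hsqrt_top.inv_tendsto_atTop
  -- limit of g0 at +infinity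
  have hA : Tendsto (fun x : ℝ => Real.exp (-l * x)) atTop (𝓝 0) := by
    have h2 : Tendsto (fun x : ℝ => l * x) atTop atTop :=
      Tendsto.const_mul_atTop hl tendsto_id
    have h3 := Real.tendsto_exp_atBot.comp (tendsto_neg_atTop_atBot.comp h2)
    exact h3.congr (fun x => by simp [Function.comp, neg_mul])
  have hB : Tendsto (fun x : ℝ => Real.exp (-a^2/4 * x⁻¹)) atTop (𝓝 1) := by
    have h0 : Tendsto (fun k : ℝ => -a^2/4 * k⁻¹) atTop (𝓝 0) := by
      have := tendsto_inv_atTop_zero.const_mul (-a^2/4)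
      rwa [mul_zero] at this
    have h := (Real.continuous_exp.tendsto 0).comp h0
    simpa [Function.comp_def] using h
  have hT1top : Tendsto (fun x : ℝ => Real.exp (-l * x) * Real.exp (-a^2/4 * x⁻¹) *
      ((Real.sqrt Real.pi)⁻¹ * (Real.sqrt x)⁻¹)) atTop (𝓝 0) := by
    have h := (hA.mul hB).mul (hsx.const_mul ((Real.sqrt Real.pi)⁻¹))
    simpa using h
  have hu_top : Tendsto (fun x : ℝ => s * Real.sqrt x - a/2 * (Real.sqrt x)⁻¹) atTop atTop := by
    have h1 : Tendsto (fun x : ℝ => s * Real.sqrt x) atTop atTop :=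
      Tendsto.const_mul_atTop hs0 hsqrt_top
    have h2 : Tendsto (fun x : ℝ => -(a/2 * (Real.sqrt x)⁻¹)) atTop (𝓝 0) := by
      simpa using (hsx.const_mul (a/2)).neg
    have h3 : ∀ᶠ x in atTop, (-1:ℝ) ≤ -(a/2 * (Real.sqrt x)⁻¹) :=
      h2.eventually (eventually_ge_nhds (by norm_num))
    refine Tendsto.congr (fun x => ?_) (tendsto_atTop_add_right_of_le' atTop (-1:ℝ) h1 h3)
    ring
  have hv_top : Tendsto (fun x : ℝ => s * Real.sqrt x + a/2 * (Real.sqrt x)⁻¹) atTop atTop := by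
    have h1 : Tendsto (fun x : ℝ => s * Real.sqrt x) atTop atTop :=
      Tendsto.const_mul_atTop hs0 hsqrt_top
    have h2 : Tendsto (fun x : ℝ => a/2 * (Real.sqrt x)⁻¹) atTop (𝓝 0) := by
      simpa using hsx.const_mul (a/2)
    have h3 : ∀ᶠ x in atTop, (-1:ℝ) ≤ a/2 * (Real.sqrt x)⁻¹ :=
      h2.eventually (eventually_ge_nhds (by norm_num))
    exact tendsto_atTop_add_right_of_le' atTop (-1:ℝ) h1 h3
  have hEu_top : Tendsto (fun x : ℝ => Eint (s * Real.sqrt x - a/2 * (Real.sqrt x)⁻¹)) atTop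
      (𝓝 (Real.sqrt Real.pi / 2)) := Eint_tendsto_atTop.comp hu_top
  have hEv_top : Tendsto (fun x : ℝ => Eint (s * Real.sqrt x + a/2 * (Real.sqrt x)⁻¹)) atTop
      (𝓝 (Real.sqrt Real.pi / 2)) := Eint_tendsto_atTop.comp hv_top
  have hg0top : Tendsto g0 atTop (𝓝 L1) := by
    have h := (hT1top.add (hEu_top.const_mul c2)).add (hEv_top.const_mul c3)
    rw [hL1]
    convert h using 2
    ring
  have hgtop : Tendsto g atTop (𝓝 L1) := by
    refine hg0top.congr' ?_
    filter_upwards [Ioi_mem_atTop (0:ℝ)] with y hy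
    exact (hgval y hy).symm
  -- limit of g0 at 0+
  have hA0 : Tendsto (fun x : ℝ => Real.exp (-l * x)) (𝓝[>] (0:ℝ)) (𝓝 1) := by
    have hc : Continuous fun x : ℝ => Real.exp (-l * x) := by continuity
    have := (hc.tendsto 0).mono_left (nhdsWithin_le_nhds (s := Ioi (0:ℝ)))
    simpa using this
  have hBs0 : Tendsto (fun x : ℝ => Real.exp (-a^2/4 * x⁻¹) * (Real.sqrt x)⁻¹)
      (𝓝[>] (0:ℝ)) (𝓝 0) := by
    have hφ : Tendsto (fun t : ℝ => t ^ ((1:ℝ)/2) * Real.exp (-(a^2/4) * t)) atTop (𝓝 0) :=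
      tendsto_rpow_mul_exp_neg_mul_atTop_nhds_zero ((1:ℝ)/2) (a^2/4) (by positivity)
    have hcomp := hφ.comp tendsto_inv_nhdsGT_zero
    refine hcomp.congr' ?_
    filter_upwards [self_mem_nhdsWithin] with x (hx : 0 < x)
    simp only [Function.comp]
    rw [← Real.sqrt_eq_rpow, Real.sqrt_inv]
    ring_nf
  have hT10 : Tendsto (fun x : ℝ => Real.exp (-l * x) * Real.exp (-a^2/4 * x⁻¹) *
      ((Real.sqrt Real.pi)⁻¹ * (Real.sqrt x)⁻¹)) (𝓝[>] (0:ℝ)) (𝓝 0) := by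
    have h := hA0.mul (hBs0.const_mul ((Real.sqrt Real.pi)⁻¹))
    have h0 : (1 * ((Real.sqrt Real.pi)⁻¹ * 0) : ℝ) = 0 := by ring
    rw [h0] at h
    exact h.congr fun x => by ring
  have hsq0 : Tendsto Real.sqrt (𝓝[>] (0:ℝ)) (𝓝[>] (0:ℝ)) := by
    rw [tendsto_nhdsWithin_iff]
    constructor
    · have := (Real.continuous_sqrt.tendsto 0).mono_left (nhdsWithin_le_nhds (s := Ioi (0:ℝ)))
      simpa using this
    · filter_upwards [self_mem_nhdsWithin] with x (hx : 0 < x)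
      exact Real.sqrt_pos.mpr hx
  have hinv0 : Tendsto (fun x : ℝ => (Real.sqrt x)⁻¹) (𝓝[>] (0:ℝ)) atTop :=
    tendsto_inv_nhdsGT_zero.comp hsq0
  have hsx0 : Tendsto (fun x : ℝ => s * Real.sqrt x) (𝓝[>] (0:ℝ)) (𝓝 0) := by
    have hc : Continuous fun x : ℝ => s * Real.sqrt x := continuous_const.mul Real.continuous_sqrt
    have := (hc.tendsto 0).mono_left (nhdsWithin_le_nhds (s := Ioi (0:ℝ)))
    simpa using this
  have hu0 : Tendsto (fun x : ℝ => s * Real.sqrt x - a/2 * (Real.sqrt x)⁻¹)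
      (𝓝[>] (0:ℝ)) atBot := by
    have h3 : Tendsto (fun x : ℝ => a/2 * (Real.sqrt x)⁻¹) (𝓝[>] (0:ℝ)) atTop :=
      Tendsto.const_mul_atTop (by positivity) hinv0
    have h4 : Tendsto (fun x : ℝ => -(a/2 * (Real.sqrt x)⁻¹)) (𝓝[>] (0:ℝ)) atBot :=
      tendsto_neg_atTop_atBot.comp h3
    have h5 : ∀ᶠ x in 𝓝[>] (0:ℝ), s * Real.sqrt x ≤ 1 :=
      hsx0.eventually (eventually_le_nhds (by norm_num))
    refine Tendsto.congr (fun x => ?_) (tendsto_atBot_add_left_of_ge' _ (1:ℝ) h5 h4)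
    ring
  have hv0 : Tendsto (fun x : ℝ => s * Real.sqrt x + a/2 * (Real.sqrt x)⁻¹)
      (𝓝[>] (0:ℝ)) atTop := by
    have h3 : Tendsto (fun x : ℝ => a/2 * (Real.sqrt x)⁻¹) (𝓝[>] (0:ℝ)) atTop :=
      Tendsto.const_mul_atTop (by positivity) hinv0
    have h5 : ∀ᶠ x in 𝓝[>] (0:ℝ), (-1:ℝ) ≤ s * Real.sqrt x :=
      hsx0.eventually (eventually_ge_nhds (by norm_num))
    exact tendsto_atTop_add_left_of_le' _ (-1:ℝ) h5 h3
  have hEu0 : Tendsto (fun x : ℝ => Eint (s * Real.sqrt x - a/2 * (Real.sqrt x)⁻¹))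
      (𝓝[>] (0:ℝ)) (𝓝 (-(Real.sqrt Real.pi / 2))) := Eint_tendsto_atBot.comp hu0
  have hEv0 : Tendsto (fun x : ℝ => Eint (s * Real.sqrt x + a/2 * (Real.sqrt x)⁻¹))
      (𝓝[>] (0:ℝ)) (𝓝 (Real.sqrt Real.pi / 2)) := Eint_tendsto_atTop.comp hv0
  have hg0zero : Tendsto g0 (𝓝[>] (0:ℝ)) (𝓝 L0) := by
    have h := (hT10.add (hEu0.const_mul c2)).add (hEv0.const_mul c3)
    rw [hL0]
    convert h using 2
    ring
  -- continuity of g within Ici 0 at 0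
  have hcont : ContinuousWithinAt g (Ici (0:ℝ)) 0 := by
    have hIci : Ici (0:ℝ) = Ioi 0 ∪ {0} := (Set.Ioi_union_left).symm
    show Tendsto g (𝓝[Ici (0:ℝ)] 0) (𝓝 (g 0))
    rw [hg0val, hIci, nhdsWithin_union, tendsto_sup]
    constructor
    · refine Tendsto.congr' ?_ hg0zero
      filter_upwards [self_mem_nhdsWithin] with y (hy : 0 < y)
      exact (hgval y hy).symm
    · rw [nhdsWithin_singleton]
      simpa [hg0val] using tendsto_pure_nhds g 0
  -- derivative
  have hderiv : ∀ x ∈ Ioi (0:ℝ), HasDerivAt g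
      (Real.exp (-l * x) *
        (1 / (4 * Real.sqrt Real.pi) * x ^ (-(5 : ℝ) / 2) * Real.exp (-a ^ 2 / (4 * x)) *
          (a ^ 2 - 2 * x))) x := by
    intro x hx
    have hx' : (0:ℝ) < x := hx
    have hr : 0 < Real.sqrt x := Real.sqrt_pos.mpr hx'
    have H := laplace_aux_deriv a s (Real.sqrt x) ha hs0 hr
    rw [Real.sq_sqrt hx'.le, hs2] at H
    refine H.congr_of_eventuallyEq ?_
    filter_upwards [Ioi_mem_nhds hx'] with y (hy : 0 < y)
    rw [hgval y hy, hg0]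
  have hint := laplace_aux_integrable a l ha hl
  have key : ∫ x in Ioi (0:ℝ),
      Real.exp (-l * x) *
        (1 / (4 * Real.sqrt Real.pi) * x ^ (-(5 : ℝ) / 2) * Real.exp (-a ^ 2 / (4 * x)) *
          (a ^ 2 - 2 * x)) = L1 - g 0 :=
    integral_Ioi_of_hasDerivAt_of_tendsto hcont hderiv hint hgtop
  rw [key, hg0val, hL1, hL0, hc2, hc3]
  rw [show -a * s = -(a*s) by ring]
  field_simp
  ring
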